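/- Fix η ∈ (0,1) and ξ ≤ L^η, and let C_ξ = {(u,w) ∈ R² : |w| ≤ ξ|u|} denote the horizontal cone. For L sufficiently large, if p = (x,y) ∈ T² with |2 + 2πL cos(2πx)| > 2L^η, then the differential dF_p of F(x,y) = (f(x) − y mod 1, x), where f(x) = 2x + L sin(2πx), maps C_ξ into C_{ξ'} for any ξ' ≥ 1/(2L^η − ξ). -/

import Mathlib

open Real

/-- cone invariance for the standard map `F(x,y) = (f(x) − y, x)`,
`f(x) = 2x + L sin(2πx)`. At a point `p = (x,y)` with `|f'(x)| = |2 + 2πL cos(2πx)| > 2L^η`,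
the differential `dF_p(u,w) = (f'(x)u + w, −u)` maps the horizontal cone
`C_ξ = {|w| ≤ ξ|u|}` into `C_{ξ'}` for any `ξ' ≥ 1/(2L^η − ξ)`, provided `0 ≤ ξ ≤ L^η`
and `L` is sufficiently large. -/
theorem stmt3 (η : ℝ) (hη : η ∈ Set.Ioo (0:ℝ) 1) :
    ∃ L₀ : ℝ, ∀ L ≥ L₀, ∀ ξ : ℝ, 0 ≤ ξ → ξ ≤ L ^ η →
      ∀ x : ℝ, 2 * L ^ η < |2 + 2 * π * L * Real.cos (2 * π * x)| →
      ∀ ξ' : ℝ, 1 / (2 * L ^ η - ξ) ≤ ξ' →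
      ∀ u w : ℝ, |w| ≤ ξ * |u| →
        |(-u)| ≤ ξ' * |(2 + 2 * π * L * Real.cos (2 * π * x)) * u + w| := by
  refine ⟨1, fun L hL ξ hξ0 hξL x hfx ξ' hξ' u w hw => ?_⟩
  set a := 2 + 2 * π * L * Real.cos (2 * π * x) with ha
  have hLpos : (0:ℝ) < L := lt_of_lt_of_le one_pos hL
  have hLη : (1:ℝ) ≤ L ^ η := Real.one_le_rpow hL (le_of_lt hη.1)
  have hpos : 0 < 2 * L ^ η - ξ := by nlinarith
  -- |a*u + w| ≥ (2L^η - ξ)|u|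
  have h1 : (2 * L ^ η - ξ) * |u| ≤ |a * u + w| := by
    have h2 : |a * u| - |w| ≤ |a * u + w| := by
      have := abs_sub_abs_le_abs_sub (a * u) (-w)
      simp at this
      linarith [abs_add_le (a * u) w, abs_mul a u]
    have h3 : |a * u| = |a| * |u| := abs_mul a u
    nlinarith [abs_nonneg u, hfx.le]
  have hξ'pos : 0 < ξ' := lt_of_lt_of_le (by positivity) hξ'
  have key : |u| ≤ ξ' * ((2 * L ^ η - ξ) * |u|) := by
    rw [one_div, inv_le_iff_one_le_mul₀ hpos] at hξ'
    nlinarith [abs_nonneg u]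
  rw [abs_neg]
  nlinarith [h1]
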